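/- The roots of P₁₁(X) = X^6 - X^5 + 7X^4 - 35X^3 + 77X^2 - 121X + 1331 in ℂ all have absolute value 11^{1/2}, and P₁₁ satisfies the functional equation X^6 · P₁₁(11/X) = 11^3 · P₁₁(X). -/

import Mathlib

open Polynomial

/-- `P₁₁(X) = X^6 - X^5 + 7X^4 - 35X^3 + 77X^2 - 121X + 1331`, viewed over `ℂ`. -/
noncomputable def P11C : Polynomial ℂ :=
  X ^ 6 - X ^ 5 + 7 * X ^ 4 - 35 * X ^ 3 + 77 * X ^ 2 - 121 * X + 1331

/-- If `s = z + 11/z` for a root `z` of `P₁₁`, then the imaginary part of the cubic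
equation satisfied by `s` forces `s` to be real. -/
lemma P11_cubic_im (x y : ℝ) (him : y * (3*x^2 - y^2 - 2*x - 26) = 0)
    (hre : x^3 - 3*x*y^2 - x^2 + y^2 - 26*x - 13 = 0) : y = 0 := by
  by_contra hy
  have h1 : 3*x^2 - y^2 - 2*x - 26 = 0 := by
    rcases mul_eq_zero.mp him with h | h
    · exact absurd h hy
    · exact h
  have hy2 : y^2 = 3*x^2 - 2*x - 26 := by linarith
  have hg : -8*x^3 + 8*x^2 + 50*x - 39 = 0 := by nlinarith [hre, hy2]
  have hpos : 3*x^2 - 2*x - 26 > 0 := by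
    have : y^2 > 0 := by positivity
    linarith [hy2]
  have hcases : x ≤ -13/5 ∨ 16/5 ≤ x := by
    by_contra hc
    push_neg at hc
    nlinarith [mul_nonneg (by linarith [hc.1] : (0:ℝ) ≤ x + 13/5)
      (by linarith [hc.2] : (0:ℝ) ≤ 16/5 - x)]
  rcases hcases with h | h
  · nlinarith [mul_nonneg (mul_nonneg (by linarith : (0:ℝ) ≤ -13/5 - x)
      (by linarith : (0:ℝ) ≤ -13/5 - x)) (by linarith : (0:ℝ) ≤ -13/5 - x),
      sq_nonneg (x + 13/5)]
  · nlinarith [mul_nonneg (mul_nonneg (by linarith : (0:ℝ) ≤ x - 16/5)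
      (by linarith : (0:ℝ) ≤ x - 16/5)) (by linarith : (0:ℝ) ≤ x - 16/5),
      sq_nonneg (x - 16/5)]

/-- Real roots of the cubic `x³ - x² - 26x - 13` satisfy `x² < 44`. -/
lemma P11_cubic_bound (x : ℝ) (h : x^3 - x^2 - 26*x - 13 = 0) : x^2 < 44 := by
  have h1 : x < 33/5 := by
    by_contra hc
    push_neg at hc
    nlinarith [mul_nonneg (mul_nonneg (by linarith : (0:ℝ) ≤ x - 33/5)
      (by linarith : (0:ℝ) ≤ x - 33/5)) (by linarith : (0:ℝ) ≤ x - 33/5),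
      sq_nonneg (x - 33/5)]
  have h2 : -33/5 < x := by
    by_contra hc
    push_neg at hc
    nlinarith [mul_nonneg (mul_nonneg (by linarith : (0:ℝ) ≤ -33/5 - x)
      (by linarith : (0:ℝ) ≤ -33/5 - x)) (by linarith : (0:ℝ) ≤ -33/5 - x),
      sq_nonneg (x + 33/5)]
  nlinarith

/-- All complex roots of `P₁₁` have absolute value `√11`, and `P₁₁` satisfies the
functional equation `X^6 · P₁₁(11/X) = 11^3 · P₁₁(X)`. -/
theorem P11_weil_polynomial :
    (∀ z : ℂ, P11C.IsRoot z → ‖z‖ = Real.sqrt 11) ∧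
      (∀ z : ℂ, z ≠ 0 → z ^ 6 * P11C.eval (11 / z) = 11 ^ 3 * P11C.eval z) := by
  constructor
  · intro z hz
    have hP : z^6 - z^5 + 7*z^4 - 35*z^3 + 77*z^2 - 121*z + 1331 = 0 := by
      simpa only [IsRoot, P11C, eval_add, eval_sub, eval_mul, eval_pow, eval_X,
        eval_ofNat] using hz
    have hz0 : z ≠ 0 := by
      rintro rfl; norm_num at hP
    set s : ℂ := z + 11 / z with hsdef
    have hsz : s * z = z^2 + 11 := by
      rw [hsdef]; field_simp
    have key : z^3 * (s^3 - s^2 - 26*s - 13) = 0 := by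
      linear_combination (s^2*z^2 + s*(z^3 - z^2 + 11*z)
        + (z^4 - z^3 - 4*z^2 - 11*z + 121)) * hsz + hP
    have hs : s^3 - s^2 - 26*s - 13 = 0 := by
      rcases mul_eq_zero.mp key with h | h
      · exact absurd (pow_eq_zero_iff (by norm_num)|>.mp h) hz0
      · exact h
    have hre := congrArg Complex.re hs
    have him := congrArg Complex.im hs
    simp only [Complex.sub_re, Complex.sub_im, Complex.mul_re, Complex.mul_im,
      Complex.re_ofNat, Complex.im_ofNat, Complex.zero_re, Complex.zero_im,
      pow_succ, pow_zero, one_mul] at hre him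
    set x := s.re with hx
    set y := s.im with hy
    have hre' : x^3 - 3*x*y^2 - x^2 + y^2 - 26*x - 13 = 0 := by
      ring_nf; ring_nf at hre; linarith
    have him' : y * (3*x^2 - y^2 - 2*x - 26) = 0 := by
      ring_nf; ring_nf at him; linarith
    have hy0 : y = 0 := P11_cubic_im x y him' hre'
    have hsx : s = (x:ℂ) := by
      apply Complex.ext
      · simp [hx]
      · simp [← hy, hy0]
    have hxcubic : x^3 - x^2 - 26*x - 13 = 0 := by
      rw [hy0] at hre'; linarith [hre']
    have hx2 : x^2 < 44 := P11_cubic_bound x hxcubic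
    have hquad : z^2 - s*z + 11 = 0 := by linear_combination -hsz
    have hquadc : (starRingEnd ℂ) z ^ 2 - s * (starRingEnd ℂ) z + 11 = 0 := by
      have h := congrArg (starRingEnd ℂ) hquad
      simpa [map_sub, map_add, map_mul, map_pow, map_ofNat, hsx,
        Complex.conj_ofReal] using h
    by_cases hzz : (starRingEnd ℂ) z = z
    · obtain ⟨a, ha⟩ := Complex.conj_eq_iff_real.mp hzz
      rw [ha, hsx] at hquad
      have hreal : a^2 - x*a + 11 = 0 := by exact_mod_cast hquad
      nlinarith [sq_nonneg (2*a - x)]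
    · have hdiff : (z - (starRingEnd ℂ) z) * (z + (starRingEnd ℂ) z - s) = 0 := by
        linear_combination hquad - hquadc
      have hne : z - (starRingEnd ℂ) z ≠ 0 := fun h => hzz (by linear_combination -h)
      have hsum : z + (starRingEnd ℂ) z = s := by
        rcases mul_eq_zero.mp hdiff with h | h
        · exact absurd h hne
        · linear_combination h
      have hnorm : z * (starRingEnd ℂ) z = 11 := by
        linear_combination -hquad + z * hsum
      have hcast : (Complex.normSq z : ℂ) = 11 := by rw [← Complex.mul_conj]; exact hnorm
      have h11 : Complex.normSq z = 11 := by exact_mod_cast hcast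
      rw [Complex.norm_def, h11]
  · intro z hz
    have he : P11C.eval (11 / z) = (11/z)^6 - (11/z)^5 + 7*(11/z)^4 - 35*(11/z)^3
        + 77*(11/z)^2 - 121*(11/z) + 1331 := by simp [P11C]
    have he2 : P11C.eval z = z^6 - z^5 + 7*z^4 - 35*z^3 + 77*z^2 - 121*z + 1331 := by
      simp [P11C]
    have hw : z * z⁻¹ = 1 := mul_inv_cancel₀ hz
    rw [he, he2]
    linear_combination (1771561*z^5*z⁻¹^5
      + (1771561*z^4 - 161051*z^5)*z⁻¹^4
      + (1771561*z^3 - 161051*z^4 + 102487*z^5)*z⁻¹^3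
      + (1771561*z^2 - 161051*z^3 + 102487*z^4 - 46585*z^5)*z⁻¹^2
      + (1771561*z - 161051*z^2 + 102487*z^3 - 46585*z^4 + 9317*z^5)*z⁻¹
      + (1771561 - 161051*z + 102487*z^2 - 46585*z^3 + 9317*z^4 - 1331*z^5)) * hw
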